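/- Among all homogeneous polynomials g of even degree d in n variables with ℓ1-norm of coefficients equal to n, the polynomial g*(x) = Σ_i x_i^d uniquely minimizes the Lebesgue volume of the sublevel set {x : g(x) ≤ 1}. -/

import Mathlib

open MeasureTheory MvPolynomial Finset

section aux

variable {n d : ℕ}

lemma aux_ball_subset (hd : Even d) (hd0 : 0 < d) :
    {x : Fin n → ℝ | ∑ i, x i ^ d ≤ 1} ⊆ Set.pi Set.univ (fun _ => Set.Icc (-1 : ℝ) 1) := by
  intro x hx i _
  have hxi : x i ^ d ≤ 1 := by
    refine le_trans ?_ hx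
    exact Finset.single_le_sum (f := fun j => x j ^ d) (fun j _ => hd.pow_nonneg _) (mem_univ i)
  have : |x i| ^ d ≤ 1 := by rwa [hd.pow_abs]
  have habs : |x i| ≤ 1 := by
    by_contra h
    push_neg at h
    exact absurd this (not_le.mpr (one_lt_pow₀ h hd0.ne'))
  exact abs_le.mp habs

lemma aux_ball_volume_lt_top (hd : Even d) (hd0 : 0 < d) :
    volume {x : Fin n → ℝ | ∑ i, x i ^ d ≤ 1} < ⊤ := by
  refine lt_of_le_of_lt (measure_mono (aux_ball_subset hd hd0)) ?_
  rw [volume_pi_pi]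
  exact WithTop.prod_lt_top (fun i _ => (by simp : volume (Set.Icc (-1:ℝ) 1) < ⊤))

lemma aux_ball_volume_pos (hd0 : 0 < d) :
    0 < volume {x : Fin n → ℝ | ∑ i, x i ^ d ≤ 1} := by
  have hopen : IsOpen {x : Fin n → ℝ | ∑ i, x i ^ d < 1} := by
    have : Continuous fun x : Fin n → ℝ => ∑ i, x i ^ d := by continuity
    exact isOpen_lt this continuous_const
  have hsub : {x : Fin n → ℝ | ∑ i, x i ^ d < 1} ⊆ {x : Fin n → ℝ | ∑ i, x i ^ d ≤ 1} :=
    fun x hx => le_of_lt (Set.mem_setOf_eq ▸ hx)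
  refine lt_of_lt_of_le ?_ (measure_mono hsub)
  refine hopen.measure_pos volume ⟨0, ?_⟩
  simp [zero_pow hd0.ne']

lemma aux_deg {g : MvPolynomial (Fin n) ℝ} (hg : g.IsHomogeneous d) :
    ∀ α ∈ g.support, ∑ i, α i = d := by
  intro α hα
  have h := hg (mem_support_iff.mp hα)
  have h' : α.degree = d := by rw [Finsupp.degree_eq_weight_one]; exact h
  have h'' : ∑ i ∈ α.support, α i = d := h'
  rw [← h'']
  exact (Finset.sum_subset (Finset.subset_univ _) (fun i _ hi =>
    Finsupp.notMem_support_iff.mp hi)).symm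

lemma aux_eval_smul {g : MvPolynomial (Fin n) ℝ} (hg : g.IsHomogeneous d)
    (r : ℝ) (x : Fin n → ℝ) :
    eval (fun i => r * x i) g = r ^ d * eval x g := by
  rw [eval_eq', eval_eq', Finset.mul_sum]
  refine Finset.sum_congr rfl fun α hα => ?_
  have hprod : ∏ i, (r * x i) ^ α i = r ^ d * ∏ i, x i ^ α i := by
    rw [← aux_deg hg α hα, ← Finset.prod_pow_eq_pow_sum]
    rw [← Finset.prod_mul_distrib]
    exact Finset.prod_congr rfl fun i _ => mul_pow _ _ _
  rw [hprod]; ring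

/-- pointwise AM-GM bound -/
lemma aux_pointwise (hd : Even d) (hd0 : 0 < d) {g : MvPolynomial (Fin n) ℝ}
    (hg : g.IsHomogeneous d) (x : Fin n → ℝ) :
    eval x g ≤ ∑ i, (∑ α ∈ g.support, |coeff α g| * (α i / d)) * x i ^ d := by
  have hdne : (d : ℝ) ≠ 0 := Nat.cast_ne_zero.mpr hd0.ne'
  rw [eval_eq']
  have key : ∀ α ∈ g.support,
      coeff α g * ∏ i, x i ^ α i ≤ |coeff α g| * ∑ i, ((α i : ℝ) / d) * x i ^ d := by
    intro α hα
    have h1 : coeff α g * ∏ i, x i ^ α i ≤ |coeff α g| * ∏ i, |x i| ^ α i := by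
      calc coeff α g * ∏ i, x i ^ α i ≤ |coeff α g * ∏ i, x i ^ α i| := le_abs_self _
        _ = |coeff α g| * ∏ i, |x i| ^ α i := by
            rw [abs_mul, Finset.abs_prod]
            congr 1
            exact Finset.prod_congr rfl fun i _ => abs_pow _ _
    refine h1.trans (mul_le_mul_of_nonneg_left ?_ (abs_nonneg _))
    have hAM := Real.geom_mean_le_arith_mean_weighted Finset.univ
      (fun i => (α i : ℝ) / d) (fun i => |x i| ^ d)
      (fun i _ => div_nonneg (Nat.cast_nonneg _) (Nat.cast_nonneg _))
      (by
        rw [← Finset.sum_div, div_eq_one_iff_eq hdne]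
        exact_mod_cast aux_deg hg α hα)
      (fun i _ => pow_nonneg (abs_nonneg _) _)
    have heq : ∀ i : Fin n, ((|x i| ^ d : ℝ)) ^ ((α i : ℝ) / d) = |x i| ^ α i := by
      intro i
      rw [← Real.rpow_natCast |x i| d, ← Real.rpow_mul (abs_nonneg _),
        mul_div_cancel₀ _ hdne, Real.rpow_natCast]
    calc ∏ i, |x i| ^ α i = ∏ i, ((|x i| ^ d : ℝ)) ^ ((α i : ℝ) / d) :=
          (Finset.prod_congr rfl fun i _ => heq i).symm
      _ ≤ ∑ i, ((α i : ℝ) / d) * (|x i| ^ d) := hAM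
      _ = ∑ i, ((α i : ℝ) / d) * (x i ^ d) := by
          exact Finset.sum_congr rfl fun i _ => by rw [hd.pow_abs]
  calc ∑ α ∈ g.support, coeff α g * ∏ i, x i ^ α i
      ≤ ∑ α ∈ g.support, |coeff α g| * ∑ i, ((α i : ℝ) / d) * x i ^ d :=
        Finset.sum_le_sum key
    _ = ∑ i, (∑ α ∈ g.support, |coeff α g| * ((α i : ℝ) / d)) * x i ^ d := by
        simp only [Finset.mul_sum, Finset.sum_mul]
        rw [Finset.sum_comm]
        exact Finset.sum_congr rfl fun i _ => Finset.sum_congr rfl fun α _ => by ring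

lemma aux_sum_c (hd0 : 0 < d) {g : MvPolynomial (Fin n) ℝ} (hg : g.IsHomogeneous d) :
    ∑ i, (∑ α ∈ g.support, |coeff α g| * ((α i : ℝ) / d)) = ∑ α ∈ g.support, |coeff α g| := by
  have hdne : (d : ℝ) ≠ 0 := Nat.cast_ne_zero.mpr hd0.ne'
  rw [Finset.sum_comm]
  refine Finset.sum_congr rfl fun α hα => ?_
  rw [← Finset.mul_sum, ← Finset.sum_div]
  rw [← Nat.cast_sum]
  rw [aux_deg hg α hα, div_self hdne, mul_one]

lemma aux_vol_scale (b : Fin n → ℝ) (hb : ∀ i, 0 < b i) (S : Set (Fin n → ℝ)) :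
    volume ((fun x : Fin n → ℝ => fun i => b i * x i) ⁻¹' S)
      = ENNReal.ofReal ((∏ i, b i)⁻¹) * volume S := by
  have hdet : LinearMap.det (Matrix.toLin' (Matrix.diagonal b)) = ∏ i, b i := by
    rw [LinearMap.det_toLin', Matrix.det_diagonal]
  have hfun : (fun x : Fin n → ℝ => fun i => b i * x i)
      = (Matrix.toLin' (Matrix.diagonal b) : (Fin n → ℝ) →ₗ[ℝ] (Fin n → ℝ)) := by
    funext x
    funext i
    rw [Matrix.toLin'_apply, Matrix.mulVec_diagonal]
  have hprodpos : 0 < ∏ i, b i := Finset.prod_pos fun i _ => hb i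
  rw [hfun, Measure.addHaar_preimage_linearMap volume (by rw [hdet]; exact hprodpos.ne') S,
    hdet, abs_of_pos (inv_pos.mpr hprodpos)]

end aux

theorem min_volume_among_l1_ball
    (n d : ℕ) (hd : Even d) (hd0 : 0 < d)
    (g : MvPolynomial (Fin n) ℝ) (hg : g.IsHomogeneous d)
    (hl1 : ∑ α ∈ g.support, |coeff α g| ≤ (n : ℝ))
    (hne : g ≠ ∑ i : Fin n, (X i : MvPolynomial (Fin n) ℝ) ^ d) :
    volume {x : Fin n → ℝ | ∑ i, x i ^ d ≤ 1}
      < volume {x : Fin n → ℝ | eval x g ≤ 1} := by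
  classical
  set B := {x : Fin n → ℝ | ∑ i, x i ^ d ≤ 1} with hB
  set G := {x : Fin n → ℝ | eval x g ≤ 1} with hG
  set c : Fin n → ℝ := fun i => ∑ α ∈ g.support, |coeff α g| * ((α i : ℝ) / d) with hc
  have hc_nonneg : ∀ i, 0 ≤ c i := fun i =>
    Finset.sum_nonneg fun α _ => mul_nonneg (abs_nonneg _)
      (div_nonneg (Nat.cast_nonneg _) (Nat.cast_nonneg _))
  have hc_sum : ∑ i, c i ≤ (n : ℝ) := by
    rw [hc]
    rw [aux_sum_c hd0 hg]
    exact hl1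
  have hptwise : ∀ x : Fin n → ℝ, eval x g ≤ ∑ i, c i * x i ^ d :=
    fun x => aux_pointwise hd hd0 hg x
  have hBfin : volume B < ⊤ := aux_ball_volume_lt_top hd hd0
  have hBpos : 0 < volume B := aux_ball_volume_pos hd0
  -- case 1 : some c i = 0
  by_cases hzero : ∃ i, c i = 0
  · obtain ⟨i, hi⟩ := hzero
    have hGtop : volume G = ⊤ := by
      set C := ∑ j, c j with hC
      have hC0 : 0 ≤ C := Finset.sum_nonneg fun j _ => hc_nonneg j
      set m : ℝ := (1 + C)⁻¹ with hm
      have hm0 : 0 < m := inv_pos.mpr (by linarith)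
      have hm1 : m ≤ 1 := by
        rw [hm]
        rw [inv_le_one_iff₀]
        right; linarith
      set t : Fin n → Set ℝ := fun j => if j = i then Set.univ else Set.Icc (-m) m with ht
      have hsub : Set.pi Set.univ t ⊆ G := by
        intro x hx
        refine le_trans (hptwise x) ?_
        have hterm : ∀ j : Fin n, c j * x j ^ d ≤ c j * m ^ d := by
          intro j
          by_cases hji : j = i
          · subst hji; rw [hi]; simp
          · have hxj : x j ∈ Set.Icc (-m) m := by
              have := hx j (Set.mem_univ j)
              simpa [ht, hji] using this
            have habs : |x j| ≤ m := abs_le.mpr ⟨hxj.1, hxj.2⟩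
            have : x j ^ d ≤ m ^ d := by
              rw [← hd.pow_abs]
              exact pow_le_pow_left₀ (abs_nonneg _) habs d
            exact mul_le_mul_of_nonneg_left this (hc_nonneg j)
        calc ∑ j, c j * x j ^ d ≤ ∑ j, c j * m ^ d := Finset.sum_le_sum fun j _ => hterm j
          _ = C * m ^ d := by rw [← Finset.sum_mul]
          _ ≤ C * m := by
              refine mul_le_mul_of_nonneg_left ?_ hC0
              calc m ^ d ≤ m ^ 1 := pow_le_pow_of_le_one hm0.le hm1 hd0
                _ = m := pow_one m
          _ = C / (1 + C) := by rw [hm, div_eq_mul_inv]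
          _ ≤ 1 := by
              rw [div_le_one (by linarith)]
              linarith
      have hvol : volume (Set.pi Set.univ t) = ⊤ := by
        rw [volume_pi_pi]
        rw [← Finset.prod_erase_mul Finset.univ _ (Finset.mem_univ i)]
        have hti : volume (t i) = ⊤ := by simp [ht]
        rw [hti, ENNReal.mul_top]
        refine Finset.prod_ne_zero_iff.mpr fun j hj => ?_
        have hji : j ≠ i := Finset.ne_of_mem_erase hj
        simp only [ht, if_neg hji]
        rw [Real.volume_Icc]
        simp only [ne_eq, ENNReal.ofReal_eq_zero, not_le]
        linarith
      rw [← top_le_iff, ← hvol]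
      exact measure_mono hsub
    rw [hGtop]
    exact hBfin
  push_neg at hzero
  have hcpos : ∀ i, 0 < c i := fun i => (hc_nonneg i).lt_of_ne' (hzero i)
  -- case 2 : all c i = 1
  by_cases hone : ∀ i, c i = 1
  · -- pointwise domination case
    have hq_eval : ∀ x : Fin n → ℝ,
        eval x (∑ i : Fin n, (X i : MvPolynomial (Fin n) ℝ) ^ d) = ∑ i, x i ^ d := by
      intro x; simp only [map_sum, map_pow, eval_X]
    have hle : ∀ x : Fin n → ℝ, eval x g ≤ ∑ i, x i ^ d := by
      intro x
      refine (hptwise x).trans_eq ?_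
      exact Finset.sum_congr rfl fun i _ => by rw [hone i, one_mul]
    have hBG : B ⊆ G := fun x hx => le_trans (hle x) hx
    obtain ⟨x₀, hx₀⟩ : ∃ x₀ : Fin n → ℝ, eval x₀ g ≠ ∑ i, x₀ i ^ d := by
      by_contra h
      push_neg at h
      exact hne (MvPolynomial.funext fun x => by rw [h x, hq_eval x])
    have hx₀lt : eval x₀ g < ∑ i, x₀ i ^ d := (hle x₀).lt_of_ne hx₀
    set Q : ℝ := ∑ i, x₀ i ^ d with hQdef
    have hQnn : 0 ≤ Q := Finset.sum_nonneg fun i _ => hd.pow_nonneg _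
    have hQpos : 0 < Q := by
      rcases hQnn.lt_or_eq with h | h
      · exact h
      · exfalso
        have hzero' : ∀ i, x₀ i = 0 := by
          intro i
          have hterm : x₀ i ^ d = 0 := by
            have hle' := Finset.single_le_sum (f := fun j => x₀ j ^ d)
              (fun j _ => hd.pow_nonneg _) (mem_univ i)
            have := hle'.trans_eq h.symm
            exact le_antisymm this (hd.pow_nonneg _)
          exact pow_eq_zero_iff hd0.ne' |>.mp hterm
        have hx₀z : x₀ = fun _ => (0 : ℝ) := funext hzero'
        have hgz : eval x₀ g = 0 := by
          have := aux_eval_smul hg 0 x₀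
          have h2 : (fun i => (0:ℝ) * x₀ i) = x₀ := by
            funext i; rw [zero_mul, hzero' i]
          rw [h2] at this
          rw [this, zero_pow hd0.ne', zero_mul]
        rw [hgz, ← h] at hx₀lt
        exact lt_irrefl 0 hx₀lt
    set M : ℝ := max (eval x₀ g) 0 with hM
    have hM0 : 0 ≤ M := le_max_right _ _
    have hMQ : M < Q := max_lt hx₀lt hQpos
    set a : ℝ := 2 / (Q + M) with ha
    have hQM : 0 < Q + M := by linarith
    have ha0 : 0 < a := div_pos two_pos hQM
    set r : ℝ := a ^ ((d : ℝ)⁻¹) with hr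
    have hr0 : 0 < r := Real.rpow_pos_of_pos ha0 _
    have hrd : r ^ d = a := by
      rw [hr, ← Real.rpow_natCast (a ^ ((d:ℝ)⁻¹)) d, ← Real.rpow_mul ha0.le,
        inv_mul_cancel₀ (Nat.cast_ne_zero.mpr hd0.ne'), Real.rpow_one]
    set y : Fin n → ℝ := fun i => r * x₀ i with hy
    have hqy : ∑ i, y i ^ d = r ^ d * Q := by
      rw [hQdef, Finset.mul_sum]
      exact Finset.sum_congr rfl fun i _ => mul_pow r (x₀ i) d
    have hgy : eval y g = r ^ d * eval x₀ g := aux_eval_smul hg r x₀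
    have hy1 : 1 < ∑ i, y i ^ d := by
      rw [hqy, hrd, ha, div_mul_eq_mul_div, lt_div_iff₀ hQM]
      linarith
    have hy2 : eval y g < 1 := by
      rw [hgy, hrd]
      have h1 : a * eval x₀ g ≤ a * M := mul_le_mul_of_nonneg_left (le_max_left _ _) ha0.le
      refine lt_of_le_of_lt (by linarith [h1] : a * eval x₀ g ≤ a * M) ?_
      rw [ha, div_mul_eq_mul_div, div_lt_one hQM]
      linarith
    set U : Set (Fin n → ℝ) := {x | eval x g < 1} ∩ {x | 1 < ∑ i, x i ^ d} with hU
    have hUopen : IsOpen U := by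
      refine IsOpen.inter ?_ ?_
      · exact isOpen_lt (MvPolynomial.continuous_eval g) continuous_const
      · exact isOpen_lt continuous_const
          (continuous_finset_sum _ fun i _ => (continuous_apply i).pow d)
    have hUne : U.Nonempty := ⟨y, hy2, hy1⟩
    have hUpos : 0 < volume U := hUopen.measure_pos volume hUne
    have hUG : U ⊆ G := fun x hx => show eval x g ≤ 1 from le_of_lt hx.1
    have hUB : Disjoint U B := by
      rw [Set.disjoint_left]
      intro x hx hxB
      have hxB' : ∑ i, x i ^ d ≤ 1 := hxB
      exact absurd hxB' (not_le.mpr hx.2)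
    have hBmeas : MeasurableSet B := by
      have hco : Continuous fun x : Fin n → ℝ => ∑ i, x i ^ d :=
        continuous_finset_sum _ fun i _ => (continuous_apply i).pow d
      exact (isClosed_le hco continuous_const).measurableSet
    have : volume (U ∪ B) ≤ volume G := measure_mono (Set.union_subset hUG hBG)
    rw [measure_union hUB hBmeas] at this
    refine lt_of_lt_of_le ?_ this
    rw [add_comm]
    exact ENNReal.lt_add_right hBfin.ne hUpos.ne'
  -- case 3 : all positive, not all one: strict product < 1
  · push_neg at hone
    obtain ⟨j, hj⟩ := hone
    have hprod1 : ∏ i, c i < 1 := by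
      have hlog : Real.log (∏ i, c i) < 0 := by
        rw [Real.log_prod fun i _ => (hcpos i).ne']
        have hstrict : ∑ i, Real.log (c i) < ∑ i, (c i - 1) := by
          refine Finset.sum_lt_sum (fun i _ => Real.log_le_sub_one_of_pos (hcpos i)) ?_
          exact ⟨j, Finset.mem_univ j, Real.log_lt_sub_one_of_pos (hcpos j) hj⟩
        have hsum : ∑ i, (c i - 1) ≤ 0 := by
          rw [Finset.sum_sub_distrib]
          simp only [Finset.sum_const, Finset.card_univ, Fintype.card_fin, nsmul_eq_mul, mul_one]
          linarith [hc_sum]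
        linarith
      have hppos : 0 < ∏ i, c i := Finset.prod_pos fun i _ => hcpos i
      exact (Real.log_neg_iff hppos).mp hlog
    set b : Fin n → ℝ := fun i => (c i) ^ ((d : ℝ)⁻¹) with hb
    have hb0 : ∀ i, 0 < b i := fun i => Real.rpow_pos_of_pos (hcpos i) _
    have hbd : ∀ i, b i ^ d = c i := by
      intro i
      rw [hb, ← Real.rpow_natCast ((c i) ^ ((d:ℝ)⁻¹)) d, ← Real.rpow_mul (hcpos i).le,
        inv_mul_cancel₀ (Nat.cast_ne_zero.mpr hd0.ne'), Real.rpow_one]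
    have hbprod : ∏ i, b i < 1 := by
      have h1 : ∏ i, b i = (∏ i, c i) ^ ((d : ℝ)⁻¹) :=
        Real.finset_prod_rpow Finset.univ c (fun i _ => (hcpos i).le) ((d : ℝ)⁻¹)
      rw [h1]
      exact Real.rpow_lt_one (Finset.prod_nonneg fun i _ => (hcpos i).le) hprod1
        (inv_pos.mpr (Nat.cast_pos.mpr hd0))
    have hbprodpos : 0 < ∏ i, b i := Finset.prod_pos fun i _ => hb0 i
    set E : Set (Fin n → ℝ) := (fun x : Fin n → ℝ => fun i => b i * x i) ⁻¹' B with hE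
    have hEG : E ⊆ G := by
      intro x hx
      have hx' : ∑ i, (b i * x i) ^ d ≤ 1 := hx
      refine le_trans (hptwise x) ?_
      refine le_trans (le_of_eq ?_) hx'
      refine Finset.sum_congr rfl fun i _ => ?_
      rw [mul_pow, hbd i]
    have hEvol : volume E = ENNReal.ofReal ((∏ i, b i)⁻¹) * volume B :=
      aux_vol_scale b hb0 B
    have hgt : volume B < volume E := by
      rw [hEvol]
      have h1 : (1 : ENNReal) < ENNReal.ofReal ((∏ i, b i)⁻¹) := by
        rw [← ENNReal.ofReal_one]
        refine (ENNReal.ofReal_lt_ofReal_iff_of_nonneg zero_le_one).mpr ?_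
        exact (one_lt_inv₀ hbprodpos).mpr hbprod
      calc volume B = 1 * volume B := (one_mul _).symm
        _ < ENNReal.ofReal ((∏ i, b i)⁻¹) * volume B :=
            ENNReal.mul_lt_mul_left hBpos.ne' hBfin.ne h1
    exact lt_of_lt_of_le hgt (measure_mono hEG)
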